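/- Let x* ∈ ℚ^E be a nonnegative vector with integer bounds π_e ∈ ℕ≥1, and ρ ∈ (0,1) with ρ·π_min ≥ 1. Partition E into X = {e : 0 < x*_e < ρ·π_min}, Y = {e : ρ·π_min ≤ x*_e < π_e}, Z = {e : x*_e = π_e}, and E₀ = {e : x*_e = 0}. Assume |X| ≤ (1/π_min)·Σ_{e∈Z} x*_e. Then Σ_{e∈E} ⌈x*_e⌉ ≤ (1 + 1/(ρ·π_min)) · Σ_{e∈E} x*_e. -/

import Mathlib

open Finset

/-- Rounding bound for basic LP solutions, case ρ·π_min ≥ 1. -/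
theorem stmt9 {E : Type*} [Fintype E] (x : E → ℚ) (π : E → ℕ) (πmin : ℕ)
    (hx0 : ∀ e, 0 ≤ x e) (hxub : ∀ e, x e ≤ (π e : ℚ))
    (hπ1 : ∀ e, 1 ≤ π e) (hπmin : ∀ e, πmin ≤ π e) (hπmin1 : 1 ≤ πmin)
    (ρ : ℚ) (hρ0 : 0 < ρ) (hρ1 : ρ < 1) (hbig : (1 : ℚ) ≤ ρ * (πmin : ℚ))
    (hX : ((Finset.univ.filter fun e => 0 < x e ∧ x e < ρ * (πmin : ℚ)).card : ℚ) ≤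
        (1 / (πmin : ℚ)) * ∑ e ∈ Finset.univ.filter (fun e => x e = (π e : ℚ)), x e) :
    (∑ e, ((⌈x e⌉ : ℤ) : ℚ)) ≤ (1 + 1 / (ρ * (πmin : ℚ))) * ∑ e, x e := by
  classical
  set c : ℚ := ρ * (πmin : ℚ) with hcdef
  have hπmQ : (1 : ℚ) ≤ (πmin : ℚ) := by exact_mod_cast hπmin1
  have hπmQ0 : (0 : ℚ) < (πmin : ℚ) := lt_of_lt_of_le one_pos hπmQ
  have hc0 : 0 < c := mul_pos hρ0 hπmQ0
  have hcπ : c ≤ (πmin : ℚ) := by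
    calc c ≤ 1 * (πmin : ℚ) := mul_le_mul_of_nonneg_right hρ1.le hπmQ0.le
    _ = (πmin : ℚ) := one_mul _
  set X : Finset E := Finset.univ.filter (fun e => 0 < x e ∧ x e < c) with hXdef
  set Yf : Finset E := Finset.univ.filter (fun e => c ≤ x e ∧ x e ≠ (π e : ℚ)) with hYdef
  set Z : Finset E := Finset.univ.filter (fun e => x e = (π e : ℚ)) with hZdef
  -- pointwise bound
  have key : ∀ e, ((⌈x e⌉ : ℤ) : ℚ) ≤ x e +
      (if (0 < x e ∧ x e < c) ∨ (c ≤ x e ∧ x e ≠ (π e : ℚ)) then (1 : ℚ) else 0) := by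
    intro e
    by_cases h0 : x e = 0
    · simp [h0]
      positivity
    · by_cases hz : x e = (π e : ℚ)
      · have hcx : c ≤ x e := by
          calc c ≤ (πmin : ℚ) := hcπ
          _ ≤ (π e : ℚ) := by exact_mod_cast hπmin e
          _ = x e := hz.symm
        have : ((⌈x e⌉ : ℤ) : ℚ) = x e := by
          rw [hz]; simp [Int.ceil_natCast]
        rw [this]
        split <;> linarith
      · have hpos : 0 < x e := lt_of_le_of_ne (hx0 e) (Ne.symm h0)
        have hceil : ((⌈x e⌉ : ℤ) : ℚ) ≤ x e + 1 := by
          have := Int.ceil_lt_add_one (x e)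
          linarith
        have : (0 < x e ∧ x e < c) ∨ (c ≤ x e ∧ x e ≠ (π e : ℚ)) := by
          rcases lt_or_ge (x e) c with h | h
          · exact Or.inl ⟨hpos, h⟩
          · exact Or.inr ⟨h, hz⟩
        rw [if_pos this]
        exact hceil
  have step1 : (∑ e, ((⌈x e⌉ : ℤ) : ℚ)) ≤ (∑ e, x e) + ((X.card : ℚ) + (Yf.card : ℚ)) := by
    have hsum := Finset.sum_le_sum (fun e (_ : e ∈ Finset.univ) => key e)
    rw [Finset.sum_add_distrib] at hsum
    have hind : (∑ e, (if (0 < x e ∧ x e < c) ∨ (c ≤ x e ∧ x e ≠ (π e : ℚ)) then (1 : ℚ) else 0))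
        = (X.card : ℚ) + (Yf.card : ℚ) := by
      rw [Finset.sum_boole]
      have hfil : Finset.univ.filter
          (fun e => (0 < x e ∧ x e < c) ∨ (c ≤ x e ∧ x e ≠ (π e : ℚ))) = X ∪ Yf := by
        rw [hXdef, hYdef, Finset.filter_or]
      have hdisj : Disjoint X Yf := by
        rw [Finset.disjoint_left]
        intro a ha hb
        rw [hXdef, Finset.mem_filter] at ha
        rw [hYdef, Finset.mem_filter] at hb
        linarith [ha.2.2, hb.2.1]
      rw [hfil, Finset.card_union_of_disjoint hdisj]
      push_cast
      ring
    rw [hind] at hsum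
    exact hsum
  -- bound on Yf.card
  have hY : (Yf.card : ℚ) ≤ (1 / c) * ∑ e ∈ Yf, x e := by
    have h1 : Yf.card • c ≤ ∑ e ∈ Yf, x e := by
      apply Finset.card_nsmul_le_sum
      intro e he
      rw [hYdef, Finset.mem_filter] at he
      exact he.2.1
    rw [nsmul_eq_mul] at h1
    rw [one_div, inv_mul_eq_div, le_div_iff₀ hc0]
    linarith
  -- X bound strengthened
  have hZnonneg : (0 : ℚ) ≤ ∑ e ∈ Z, x e := Finset.sum_nonneg fun e _ => hx0 e
  have hX' : (X.card : ℚ) ≤ (1 / c) * ∑ e ∈ Z, x e := by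
    refine le_trans hX ?_
    apply mul_le_mul_of_nonneg_right _ hZnonneg
    exact one_div_le_one_div_of_le hc0 hcπ
  -- combine
  have hdisjZY : Disjoint Z Yf := by
    rw [Finset.disjoint_left]
    intro a ha hb
    rw [hZdef, Finset.mem_filter] at ha
    rw [hYdef, Finset.mem_filter] at hb
    exact hb.2.2 ha.2
  have hsub : (∑ e ∈ Z, x e) + (∑ e ∈ Yf, x e) ≤ ∑ e, x e := by
    rw [← Finset.sum_union hdisjZY]
    apply Finset.sum_le_sum_of_subset_of_nonneg (Finset.subset_univ _)
    intro e _ _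
    exact hx0 e
  have hc0' : (0 : ℚ) ≤ 1 / c := by positivity
  calc (∑ e, ((⌈x e⌉ : ℤ) : ℚ)) ≤ (∑ e, x e) + ((X.card : ℚ) + (Yf.card : ℚ)) := step1
  _ ≤ (∑ e, x e) + ((1 / c) * ∑ e ∈ Z, x e + (1 / c) * ∑ e ∈ Yf, x e) := by
      apply add_le_add_right (add_le_add hX' hY)
  _ = (∑ e, x e) + (1 / c) * ((∑ e ∈ Z, x e) + (∑ e ∈ Yf, x e)) := by ring
  _ ≤ (∑ e, x e) + (1 / c) * (∑ e, x e) := by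
      apply add_le_add_right (mul_le_mul_of_nonneg_left hsub hc0')
  _ = (1 + 1 / c) * ∑ e, x e := by ring
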